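/- arXiv:2105.14339 — 2 statements merged into one kernel-verified Lean document; each statement's English description precedes it below -/
import Mathlib

section
/- Let G be a finite simple graph with at least one edge and with no maximal independent set of cardinality 1, and let H be a graph with exactly one vertex, disjoint from G. Then the join G ∨ H is well-f-covered if and only if G is well-f-covered, G is well-covered, and f(G) = α(G) + 1. In that case f(G ∨ H) = f(G). -/
/-- `X` induces a forest in `G`: the subgraph induced by `X` is acyclic. -/
def IsInducedForest {V : Type*} (G : SimpleGraph V) (X : Finset V) : Prop :=
  (G.induce (X : Set V)).IsAcyclic

/-- `X` is a maximal induced forest of `G`. -/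
def IsMaximalInducedForest {V : Type*} (G : SimpleGraph V) (X : Finset V) : Prop :=
  IsInducedForest G X ∧ ∀ Y : Finset V, X ⊂ Y → ¬ IsInducedForest G Y

/-- The forest number of `G`: maximum cardinality of an induced forest. -/
noncomputable def forestNum {V : Type*} (G : SimpleGraph V) : ℕ :=
  sSup {n | ∃ X : Finset V, IsInducedForest G X ∧ X.card = n}

/-- `G` is well-f-covered: all maximal induced forests have the same cardinality. -/
def WellFCovered {V : Type*} (G : SimpleGraph V) : Prop :=
  ∀ X Y : Finset V, IsMaximalInducedForest G X → IsMaximalInducedForest G Y →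
    X.card = Y.card

def IsIndepFinset {V : Type*} (G : SimpleGraph V) (X : Finset V) : Prop :=
  ∀ ⦃u⦄, u ∈ X → ∀ ⦃v⦄, v ∈ X → ¬ G.Adj u v

def IsMaximalIndepSet {V : Type*} (G : SimpleGraph V) (X : Finset V) : Prop :=
  IsIndepFinset G X ∧ ∀ Y : Finset V, X ⊂ Y → ¬ IsIndepFinset G Y

noncomputable def indepNum {V : Type*} (G : SimpleGraph V) : ℕ :=
  sSup {n | ∃ X : Finset V, IsIndepFinset G X ∧ X.card = n}

def WellCovered {V : Type*} (G : SimpleGraph V) : Prop :=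
  ∀ X Y : Finset V, IsMaximalIndepSet G X → IsMaximalIndepSet G Y → X.card = Y.card

/-- The join of two graphs on disjoint vertex sets. -/
def joinGraph {V W : Type*} (G : SimpleGraph V) (H : SimpleGraph W) :
    SimpleGraph (V ⊕ W) where
  Adj a b :=
    match a, b with
    | Sum.inl u, Sum.inl v => G.Adj u v
    | Sum.inr u, Sum.inr v => H.Adj u v
    | Sum.inl _, Sum.inr _ => True
    | Sum.inr _, Sum.inl _ => True
  symm := ⟨by rintro (u|u) (v|v) h <;> first | exact h.symm | trivial⟩
  loopless := ⟨by rintro (u|u) h <;> exact SimpleGraph.irrefl _ h⟩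


set_option linter.unusedSectionVars false

section Aux
open SimpleGraph

/-- A graph in which every edge touches `c` is acyclic. -/
lemma acyclic_of_star {U : Type*} [DecidableEq U] {K : SimpleGraph U} (c : U)
    (h : ∀ a b, K.Adj a b → a = c ∨ b = c) : K.IsAcyclic := by
  intro v p hp
  have hc : c ∈ p.support := by
    cases p with
    | nil => simp at hp
    | cons hadj q =>
      rcases h _ _ hadj with rfl | rfl
      · exact SimpleGraph.Walk.start_mem_support _
      · simp [SimpleGraph.Walk.support_cons]
  have hq := hp.rotate hc
  generalize (p.rotate c hc) = q at hq
  cases q with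
  | nil => simp at hq
  | cons h1 r =>
    rename_i x
    have hx : x ≠ c := h1.ne'
    cases r with
    | nil => exact hx rfl
    | cons h2 r2 =>
      rename_i y
      have hy : y = c := by
        rcases h _ _ h2 with h' | h'
        · exact absurd h' hx
        · exact h'
      subst hy
      cases r2 with
      | nil =>
        have := hq.1.1
        simp [SimpleGraph.Walk.isTrail_def, Sym2.eq_swap] at this
      | cons h3 r3 =>
        have hnd := hq.2
        simp [SimpleGraph.Walk.support_cons] at hnd

lemma acyclic_of_hom' {U U' : Type*} {K : SimpleGraph U} {K' : SimpleGraph U'}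
    (f : K →g K') (hf : Function.Injective f) (h : K'.IsAcyclic) : K.IsAcyclic := by
  intro v p hp
  exact h (p.map f) (hp.map hf)

lemma not_acyclic_of_triangle {U : Type*} {K : SimpleGraph U} {a b c : U}
    (hab : K.Adj a b) (hbc : K.Adj b c) (hca : K.Adj c a) : ¬ K.IsAcyclic := by
  intro hK
  have hcyc : (Walk.cons hab (Walk.cons hbc (Walk.cons hca Walk.nil))).IsCycle := by
    simp [Walk.isCycle_def, Walk.isTrail_def, Walk.edges_cons, Walk.support_cons,
      hab.ne, hbc.ne, hca.ne, hab.ne', hbc.ne', hca.ne', Sym2.eq, Sym2.rel_iff',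
      Prod.ext_iff]
  exact hK _ hcyc

variable {V W : Type*} [Fintype V] [Fintype W] [DecidableEq V] [DecidableEq W]
  {G : SimpleGraph V} {H : SimpleGraph W}

/-- Subsets of induced forests are induced forests. -/
lemma IsInducedForest.mono {X Y : Finset V} (h : IsInducedForest G Y) (hXY : X ⊆ Y) :
    IsInducedForest G X := by
  exact acyclic_of_hom'
    ⟨fun a => ⟨a.1, Finset.mem_coe.mpr (hXY (Finset.mem_coe.mp a.2))⟩, fun hadj => hadj⟩
    (fun a b hEq => by have h2 := congrArg Subtype.val hEq; exact Subtype.ext h2) h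

/-- Independent sets are induced forests. -/
lemma IsIndepFinset.forest {S : Finset V} (h : IsIndepFinset G S) :
    IsInducedForest G S := by
  intro v p hp
  cases p with
  | nil => simp at hp
  | cons hadj q =>
    rename_i b
    exact h (Finset.mem_coe.mp v.2) (Finset.mem_coe.mp b.2) hadj


section Join
variable (G : SimpleGraph V) (H : SimpleGraph W)

def iota (X : Finset V) : Finset (V ⊕ W) := X.map ⟨Sum.inl, Sum.inl_injective⟩

lemma mem_iota {X : Finset V} {v : V} : Sum.inl v ∈ (iota X : Finset (V ⊕ W)) ↔ v ∈ X := by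
  simp [iota]

lemma inr_not_mem_iota {X : Finset V} {x : W} : Sum.inr x ∉ (iota X : Finset (V ⊕ W)) := by
  simp [iota]

lemma card_iota (X : Finset V) : (iota X : Finset (V ⊕ W)).card = X.card :=
  Finset.card_map _

variable {G H} (w : W)

lemma forest_iota (X : Finset V) :
    IsInducedForest (joinGraph G H) (iota X) ↔ IsInducedForest G X := by
  constructor
  · intro h
    refine acyclic_of_hom'
      ⟨fun a => ⟨Sum.inl a.1, by simpa [mem_iota] using a.2⟩, fun hadj => hadj⟩ ?_ h
    rintro ⟨u, hu⟩ ⟨v, hv⟩ hEq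
    have h2 : (Sum.inl u : V ⊕ W) = Sum.inl v := congrArg Subtype.val hEq
    exact Subtype.ext (Sum.inl_injective h2)
  · intro h
    refine acyclic_of_hom' (K' := G.induce (X : Set V)) ⟨?_, ?_⟩ ?_ h
    · rintro ⟨(v | x), hv⟩
      · exact ⟨v, by simpa [mem_iota] using hv⟩
      · exact absurd (by simpa using hv) (inr_not_mem_iota (X := X))
    · rintro ⟨(u | x), hu⟩ ⟨(v | y), hv⟩ hadj
      · exact hadj
      · exact absurd (by simpa using hv) (inr_not_mem_iota (X := X))
      · exact absurd (by simpa using hu) (inr_not_mem_iota (X := X))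
      · exact absurd (by simpa using hu) (inr_not_mem_iota (X := X))
    · rintro ⟨(u | x), hu⟩ ⟨(v | y), hv⟩ hEq
      · simpa [Subtype.ext_iff] using hEq
      · exact absurd (by simpa using hv) (inr_not_mem_iota (X := X))
      · exact absurd (by simpa using hu) (inr_not_mem_iota (X := X))
      · exact absurd (by simpa using hu) (inr_not_mem_iota (X := X))

lemma forest_insert (hw : ∀ y : W, y = w) (S : Finset V) :
    IsInducedForest (joinGraph G H) (insert (Sum.inr w) (iota S)) ↔ IsIndepFinset G S := by
  constructor
  · intro h u hu v hv hadj
    refine not_acyclic_of_triangle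
      (K := (joinGraph G H).induce ((insert (Sum.inr w) (iota S) : Finset (V ⊕ W)) : Set (V ⊕ W)))
      (a := ⟨Sum.inr w, by simp⟩)
      (b := ⟨Sum.inl u, by simp [iota, hu]⟩)
      (c := ⟨Sum.inl v, by simp [iota, hv]⟩) ?_ ?_ ?_ h
    · trivial
    · exact hadj
    · trivial
  · intro hS
    refine acyclic_of_star (⟨Sum.inr w, by simp⟩ :
      ((insert (Sum.inr w) (iota S) : Finset (V ⊕ W)) : Set (V ⊕ W))) ?_
    rintro ⟨(u | x), hu⟩ ⟨(v | y), hv⟩ hadj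
    · refine absurd hadj (hS ?_ ?_)
      · have := Finset.mem_coe.mp hu
        simpa [iota] using this
      · have := Finset.mem_coe.mp hv
        simpa [iota] using this
    · exact Or.inr (Subtype.ext (by simp [hw y]))
    · exact Or.inl (Subtype.ext (by simp [hw x]))
    · exact Or.inl (Subtype.ext (by simp [hw x]))

lemma decomp_not_mem (hw : ∀ y : W, y = w) {A : Finset (V ⊕ W)} (h : Sum.inr w ∉ A) :
    A = iota A.toLeft := by
  ext a
  cases a with
  | inl v => simp [mem_iota, Finset.mem_toLeft]
  | inr x =>
    rw [hw x]
    simp [h, inr_not_mem_iota]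

lemma decomp_mem (hw : ∀ y : W, y = w) {A : Finset (V ⊕ W)} (h : Sum.inr w ∈ A) :
    A = insert (Sum.inr w) (iota A.toLeft) := by
  ext a
  cases a with
  | inl v => simp [iota, Finset.mem_toLeft]
  | inr x =>
    rw [hw x]
    simp [h, inr_not_mem_iota]

lemma card_insert_iota (S : Finset V) :
    (insert (Sum.inr w) (iota S) : Finset (V ⊕ W)).card = S.card + 1 := by
  rw [Finset.card_insert_of_notMem inr_not_mem_iota, card_iota]


lemma iota_mono {X Y : Finset V} (h : X ⊆ Y) : (iota X : Finset (V ⊕ W)) ⊆ iota Y :=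
  Finset.map_subset_map.mpr h

lemma iota_ssubset {X Y : Finset V} (h : X ⊂ Y) : (iota X : Finset (V ⊕ W)) ⊂ iota Y :=
  Finset.map_ssubset_map.mpr h

end Join

section MaxLemmas
variable {G : SimpleGraph V} {H : SimpleGraph W}

lemma forest_empty (K : SimpleGraph V) : IsInducedForest K (∅ : Finset V) :=
  fun v => absurd v.2 (by simp)

lemma indep_empty (K : SimpleGraph V) : IsIndepFinset K (∅ : Finset V) :=
  fun u hu => absurd hu (by simp)

/-- Any set satisfying `P` extends to a maximal one. -/
lemma exists_maximal_pred {U : Type*} [Fintype U] [DecidableEq U] (P : Finset U → Prop)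
    (X : Finset U) (hX : P X) :
    ∃ Y, X ⊆ Y ∧ P Y ∧ ∀ Z, Y ⊂ Z → ¬ P Z := by
  obtain ⟨n, hn⟩ : ∃ n, Fintype.card U - X.card ≤ n := ⟨Fintype.card U, by omega⟩
  induction n generalizing X with
  | zero =>
    refine ⟨X, Finset.Subset.refl X, hX, fun Z hZ _ => ?_⟩
    have h1 := Finset.card_lt_card hZ
    have h2 := Finset.card_le_univ Z
    omega
  | succ n ih =>
    by_cases h : ∀ Z, X ⊂ Z → ¬ P Z
    · exact ⟨X, Finset.Subset.refl X, hX, h⟩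
    · push_neg at h
      obtain ⟨Z, hXZ, hZ⟩ := h
      have h1 := Finset.card_lt_card hXZ
      obtain ⟨Y, hZY, hY⟩ := ih Z hZ (by omega)
      exact ⟨Y, hXZ.subset.trans hZY, hY⟩

lemma exists_max_forest {U : Type*} [Fintype U] [DecidableEq U] (K : SimpleGraph U)
    {X : Finset U} (hX : IsInducedForest K X) :
    ∃ Y, X ⊆ Y ∧ IsMaximalInducedForest K Y := by
  obtain ⟨Y, h1, h2, h3⟩ := exists_maximal_pred (IsInducedForest K) X hX
  exact ⟨Y, h1, h2, h3⟩

lemma forestNum_spec (K : SimpleGraph V) :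
    ∃ X : Finset V, IsInducedForest K X ∧ X.card = forestNum K := by
  have hne : {n | ∃ X : Finset V, IsInducedForest K X ∧ X.card = n}.Nonempty :=
    ⟨0, ∅, forest_empty K, Finset.card_empty⟩
  have hbdd : BddAbove {n | ∃ X : Finset V, IsInducedForest K X ∧ X.card = n} := by
    refine ⟨Fintype.card V, ?_⟩
    rintro n ⟨X, _, rfl⟩
    simpa using Finset.card_le_univ X
  exact Nat.sSup_mem hne hbdd

lemma card_le_forestNum {K : SimpleGraph V} {X : Finset V} (h : IsInducedForest K X) :
    X.card ≤ forestNum K := by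
  have hbdd : BddAbove {n | ∃ X : Finset V, IsInducedForest K X ∧ X.card = n} := by
    refine ⟨Fintype.card V, ?_⟩
    rintro n ⟨X, _, rfl⟩
    simpa using Finset.card_le_univ X
  exact le_csSup hbdd ⟨X, h, rfl⟩

lemma indepNum_spec (K : SimpleGraph V) :
    ∃ X : Finset V, IsIndepFinset K X ∧ X.card = _root_.indepNum K := by
  have hne : {n | ∃ X : Finset V, IsIndepFinset K X ∧ X.card = n}.Nonempty :=
    ⟨0, ∅, indep_empty K, Finset.card_empty⟩
  have hbdd : BddAbove {n | ∃ X : Finset V, IsIndepFinset K X ∧ X.card = n} := by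
    refine ⟨Fintype.card V, ?_⟩
    rintro n ⟨X, _, rfl⟩
    simpa using Finset.card_le_univ X
  exact Nat.sSup_mem hne hbdd

lemma card_le_indepNum {K : SimpleGraph V} {X : Finset V} (h : IsIndepFinset K X) :
    X.card ≤ _root_.indepNum K := by
  have hbdd : BddAbove {n | ∃ X : Finset V, IsIndepFinset K X ∧ X.card = n} := by
    refine ⟨Fintype.card V, ?_⟩
    rintro n ⟨X, _, rfl⟩
    simpa using Finset.card_le_univ X
  exact le_csSup hbdd ⟨X, h, rfl⟩

lemma maximal_of_card_forestNum {K : SimpleGraph V} {X : Finset V}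
    (h : IsInducedForest K X) (hc : X.card = forestNum K) :
    IsMaximalInducedForest K X := by
  refine ⟨h, fun Y hXY hY => ?_⟩
  have h1 := Finset.card_lt_card hXY
  have h2 := card_le_forestNum hY
  omega

lemma maximal_of_card_indepNum {K : SimpleGraph V} {X : Finset V}
    (h : IsIndepFinset K X) (hc : X.card = _root_.indepNum K) :
    IsMaximalIndepSet K X := by
  refine ⟨h, fun Y hXY hY => ?_⟩
  have h1 := Finset.card_lt_card hXY
  have h2 := card_le_indepNum hY
  omega

/-- Under `hGe`, no maximal induced forest is independent. -/
lemma max_forest_not_indep (hGe : ∃ u v, G.Adj u v) {X : Finset V}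
    (hX : IsMaximalInducedForest G X) : ¬ IsIndepFinset G X := by
  intro hind
  by_cases hU : X = Finset.univ
  · obtain ⟨u, v, huv⟩ := hGe
    exact hind (by simp [hU]) (by simp [hU]) huv
  · obtain ⟨v, hv⟩ : ∃ v, v ∉ X := by
      by_contra h
      push_neg at h
      exact hU (Finset.eq_univ_iff_forall.mpr h)
    refine hX.2 (insert v X) (Finset.ssubset_insert hv) ?_
    refine acyclic_of_star (⟨v, by simp⟩ : ((insert v X : Finset V) : Set V)) ?_
    rintro ⟨a, ha⟩ ⟨b, hb⟩ hadj
    by_cases hav : a = v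
    · exact Or.inl (Subtype.ext hav)
    by_cases hbv : b = v
    · exact Or.inr (Subtype.ext hbv)
    exfalso
    have ha' : a ∈ X := by
      rcases Finset.mem_insert.mp (Finset.mem_coe.mp ha) with h | h
      · exact absurd h hav
      · exact h
    have hb' : b ∈ X := by
      rcases Finset.mem_insert.mp (Finset.mem_coe.mp hb) with h | h
      · exact absurd h hbv
      · exact h
    exact hind ha' hb' hadj

/-- A maximal forest of `G` gives a maximal forest of the join. -/
lemma max_join_of_max_forest (hGe : ∃ u v, G.Adj u v) (w : W) (hw : ∀ y : W, y = w)
    {X : Finset V} (hX : IsMaximalInducedForest G X) :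
    IsMaximalInducedForest (joinGraph G H) (iota X) := by
  refine ⟨(forest_iota X).mpr hX.1, ?_⟩
  intro Y hY hfY
  by_cases hwY : Sum.inr w ∈ Y
  · obtain ⟨u, hu, v, hv, huv⟩ : ∃ u, u ∈ X ∧ ∃ v, v ∈ X ∧ G.Adj u v := by
      have hni := max_forest_not_indep hGe hX
      by_contra hcon
      push_neg at hcon
      exact hni (fun u hu v hv => hcon u hu v hv)
    exact not_acyclic_of_triangle
      (K := (joinGraph G H).induce ((Y : Finset (V ⊕ W)) : Set (V ⊕ W)))
      (a := (⟨Sum.inr w, Finset.mem_coe.mpr hwY⟩ : ((Y : Finset (V ⊕ W)) : Set (V ⊕ W))))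
      (b := ⟨Sum.inl u, Finset.mem_coe.mpr (hY.subset (mem_iota.mpr hu))⟩)
      (c := ⟨Sum.inl v, Finset.mem_coe.mpr (hY.subset (mem_iota.mpr hv))⟩)
      trivial huv trivial hfY
  · have hYd := decomp_not_mem w hw hwY
    have hss : X ⊂ Y.toLeft := by
      constructor
      · intro v hv
        exact Finset.mem_toLeft.mpr (hY.subset (mem_iota.mpr hv))
      · intro hcon
        exact hY.2 (by rw [hYd]; exact iota_mono hcon)
    have hfY' : IsInducedForest (joinGraph G H) (iota Y.toLeft) := by
      rw [← hYd]; exact hfY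
    exact hX.2 Y.toLeft hss ((forest_iota _).mp hfY')

/-- A maximal independent set of `G` gives a maximal forest of the join. -/
lemma max_join_of_max_indep (w : W) (hw : ∀ y : W, y = w)
    {S : Finset V} (hS : IsMaximalIndepSet G S) :
    IsMaximalInducedForest (joinGraph G H) (insert (Sum.inr w) (iota S)) := by
  refine ⟨(forest_insert w hw S).mpr hS.1, ?_⟩
  intro Y hY hfY
  have hwY : Sum.inr w ∈ Y := hY.subset (Finset.mem_insert_self _ _)
  have hYd := decomp_mem w hw hwY
  have hss : S ⊂ Y.toLeft := by
    constructor
    · intro v hv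
      exact Finset.mem_toLeft.mpr (hY.subset (Finset.mem_insert_of_mem (mem_iota.mpr hv)))
    · intro hcon
      exact hY.2 (by rw [hYd]; exact Finset.insert_subset_insert _ (iota_mono hcon))
  have hfY' : IsInducedForest (joinGraph G H) (insert (Sum.inr w) (iota Y.toLeft)) := by
    rw [← hYd]; exact hfY
  exact hS.2 Y.toLeft hss ((forest_insert w hw _).mp hfY')

/-- Decomposition of maximal forests of the join. -/
lemma max_join_decomp (w : W) (hw : ∀ y : W, y = w) {A : Finset (V ⊕ W)}
    (hA : IsMaximalInducedForest (joinGraph G H) A) :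
    (Sum.inr w ∉ A → IsMaximalInducedForest G A.toLeft) ∧
    (Sum.inr w ∈ A → IsMaximalIndepSet G A.toLeft) := by
  constructor
  · intro hwA
    have hAd := decomp_not_mem w hw hwA
    refine ⟨(forest_iota _).mp (by rw [← hAd]; exact hA.1), ?_⟩
    intro Z hZ hfZ
    refine hA.2 (iota Z) ?_ ((forest_iota Z).mpr hfZ)
    rw [hAd]
    exact iota_ssubset hZ
  · intro hwA
    have hAd := decomp_mem w hw hwA
    refine ⟨(forest_insert w hw _).mp (by rw [← hAd]; exact hA.1), ?_⟩
    intro Z hZ hiZ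
    refine hA.2 (insert (Sum.inr w) (iota Z)) ?_ ((forest_insert w hw Z).mpr hiZ)
    rw [hAd]
    constructor
    · exact Finset.insert_subset_insert _ (iota_mono hZ.1)
    · intro hcon
      refine hZ.2 ?_
      intro v hv
      have hmem : Sum.inl v ∈ insert (Sum.inr w) (iota A.toLeft) :=
        hcon (Finset.mem_insert_of_mem (mem_iota.mpr hv))
      rcases Finset.mem_insert.mp hmem with h | h
      · exact absurd h (by simp)
      · exact mem_iota.mp h

end MaxLemmas



end Aux

/-- Let `G` have at least one edge and no maximal independent set of
cardinality 1, and let `H` be a graph with exactly one vertex. Then the join `G ∨ H`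
is well-f-covered iff `G` is both well-f-covered and well-covered and
`f(G) = α(G) + 1`. In that case `f(G ∨ H) = f(G)`. -/
theorem stmt16 {V W : Type*} [Fintype V] [Fintype W] [DecidableEq V] [DecidableEq W]
    (G : SimpleGraph V) (H : SimpleGraph W) (hW : Fintype.card W = 1)
    (hGe : ∃ u v, G.Adj u v)
    (hG1 : ¬ ∃ X : Finset V, IsMaximalIndepSet G X ∧ X.card = 1) :
    (WellFCovered (joinGraph G H) ↔
      WellFCovered G ∧ WellCovered G ∧ forestNum G = indepNum G + 1) ∧
    (WellFCovered (joinGraph G H) → forestNum (joinGraph G H) = forestNum G) := by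
  obtain ⟨w, hw⟩ := Fintype.card_eq_one_iff.mp hW
  obtain ⟨Xf, hXf, hXfc⟩ := forestNum_spec G
  have hXfmax := maximal_of_card_forestNum hXf hXfc
  obtain ⟨Sa, hSa, hSac⟩ := indepNum_spec G
  have hSamax := maximal_of_card_indepNum hSa hSac
  have hforward : WellFCovered (joinGraph G H) →
      WellFCovered G ∧ WellCovered G ∧ forestNum G = indepNum G + 1 := by
    intro WF
    refine ⟨?_, ?_, ?_⟩
    · intro X Y hX hY
      have := WF (iota X) (iota Y) (max_join_of_max_forest hGe w hw hX)
        (max_join_of_max_forest hGe w hw hY)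
      simpa [card_iota] using this
    · intro S T hS hT
      have := WF (insert (Sum.inr w) (iota S)) (insert (Sum.inr w) (iota T))
        (max_join_of_max_indep w hw hS) (max_join_of_max_indep w hw hT)
      rw [card_insert_iota, card_insert_iota] at this
      omega
    · have := WF (iota Xf) (insert (Sum.inr w) (iota Sa))
        (max_join_of_max_forest hGe w hw hXfmax) (max_join_of_max_indep w hw hSamax)
      rw [card_iota, card_insert_iota] at this
      omega
  have hallcard : (WellFCovered G ∧ WellCovered G ∧ forestNum G = indepNum G + 1) →
      ∀ A : Finset (V ⊕ W), IsMaximalInducedForest (joinGraph G H) A →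
        A.card = forestNum G := by
    rintro ⟨hwf, hwc, hfa⟩ A hA
    by_cases hwA : Sum.inr w ∈ A
    · have hmax := (max_join_decomp w hw hA).2 hwA
      have h1 : A.toLeft.card = Sa.card := hwc _ _ hmax hSamax
      have h2 : A.card = A.toLeft.card + 1 := by
        conv_lhs => rw [decomp_mem w hw hwA]
        rw [card_insert_iota]
      omega
    · have hmax := (max_join_decomp w hw hA).1 hwA
      have h1 : A.toLeft.card = Xf.card := hwf _ _ hmax hXfmax
      have h2 : A.card = A.toLeft.card := by
        conv_lhs => rw [decomp_not_mem w hw hwA]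
        rw [card_iota]
      omega
  refine ⟨⟨hforward, ?_⟩, ?_⟩
  · intro hcond A B hA hB
    rw [hallcard hcond A hA, hallcard hcond B hB]
  · intro WF
    have hcond := hforward WF
    apply le_antisymm
    · refine csSup_le ⟨0, ∅, forest_empty _, Finset.card_empty⟩ ?_
      rintro n ⟨A, hA, rfl⟩
      obtain ⟨B, hAB, hB⟩ := exists_max_forest (joinGraph G H) hA
      calc A.card ≤ B.card := Finset.card_le_card hAB
        _ = forestNum G := hallcard hcond B hB
    · have hbdd : BddAbove {n | ∃ X : Finset (V ⊕ W),
          IsInducedForest (joinGraph G H) X ∧ X.card = n} := by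
        refine ⟨Fintype.card (V ⊕ W), ?_⟩
        rintro n ⟨X, _, rfl⟩
        simpa using Finset.card_le_univ X
      refine le_csSup hbdd ⟨iota Xf, (forest_iota Xf).mpr hXf, ?_⟩
      rw [card_iota, hXfc]
end

section
/- For n ≥ 4, the wheel W_n on n vertices (the join of a cycle on n - 1 vertices with a single additional vertex adjacent to all cycle vertices) is well-f-covered if and only if n = 4 or n = 5. -/
open SimpleGraph

section Aux

lemma acyclic_of_unique_smaller {V : Type*} (G : SimpleGraph V) (f : V → ℕ)
    (hinj : Function.Injective f)
    (h : ∀ v u₁ u₂, G.Adj v u₁ → G.Adj v u₂ → f u₁ < f v → f u₂ < f v → u₁ = u₂) :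
    G.IsAcyclic := by
  classical
  intro v c hc
  obtain ⟨m, hmmem, hmax⟩ := (c.support.toFinset).exists_max_image f
    ⟨v, by simp [Walk.start_mem_support]⟩
  rw [List.mem_toFinset] at hmmem
  have hmax' : ∀ x ∈ c.support, f x ≤ f m := fun x hx => hmax x (List.mem_toFinset.mpr hx)
  set c' := c.rotate m hmmem with hc'def
  have hc' : c'.IsCycle := hc.rotate hmmem
  have hsub : ∀ x, x ∈ c'.support → x ∈ c.support := by
    intro x hx
    rw [Walk.support_eq_cons] at hx
    rcases List.mem_cons.mp hx with rfl | hx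
    · exact hmmem
    · have hperm := Walk.support_rotate c m hmmem
      have := hperm.mem_iff.mp hx
      rw [Walk.support_eq_cons c]
      exact List.mem_cons_of_mem _ this
  -- destructure c'
  have hnn : ¬ c'.Nil := hc'.not_nil
  obtain ⟨u, hadj, p, hpe⟩ := Walk.not_nil_iff.mp hnn
  -- destructure p.reverse
  have hum : m ≠ u := G.ne_of_adj hadj
  obtain ⟨w, hadj2, r, hre⟩ := Walk.exists_eq_cons_of_ne hum p.reverse
  -- memberships
  have hup : u ∈ c'.support := by
    rw [hpe]; simp [Walk.support_cons, Walk.start_mem_support]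
  have hwp : w ∈ c'.support := by
    rw [hpe]
    have : w ∈ p.reverse.support := by rw [hre]; simp [Walk.start_mem_support]
    rw [Walk.support_reverse, List.mem_reverse] at this
    simp [Walk.support_cons, this]
  have hfu : f u < f m := lt_of_le_of_ne (hmax' u (hsub u hup)) (fun he => hum (hinj he.symm))
  have hwm : m ≠ w := G.ne_of_adj hadj2
  have hfw : f w < f m := lt_of_le_of_ne (hmax' w (hsub w hwp)) (fun he => hwm (hinj he.symm))
  have huw : u = w := h m u w hadj hadj2 hfu hfw
  -- contradiction with trail
  have hedges : c'.edges = s(m, u) :: p.edges := by rw [hpe]; simp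
  have hmem : s(m, w) ∈ p.edges := by
    have : s(m, w) ∈ p.reverse.edges := by rw [hre]; simp
    rwa [Walk.edges_reverse, List.mem_reverse] at this
  have hnodup := hc'.edges_nodup
  rw [hedges] at hnodup
  exact List.Nodup.notMem hnodup (huw ▸ hmem)

lemma cycleGraph_not_acyclic {m : ℕ} (hm : 3 ≤ m) : ¬ (cycleGraph m).IsAcyclic := by
  intro hA
  obtain ⟨k, rfl⟩ : ∃ k, m = k + 3 := ⟨m - 3, by omega⟩
  have hconn : (cycleGraph (k + 3)).Connected := cycleGraph_connected
  have htree : (cycleGraph (k + 3)).IsTree := ⟨hconn, hA⟩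
  have hcard := htree.card_edgeFinset
  have hdeg : ∑ v : Fin (k + 3), (cycleGraph (k + 3)).degree v = 2 * (k + 3) := by
    rw [Finset.sum_congr rfl (fun v _ => cycleGraph_degree_three_le)]
    simp [Finset.card_univ, mul_comm]
  rw [sum_degrees_eq_twice_card_edges] at hdeg
  have : (cycleGraph (k + 3)).edgeFinset.card = k + 3 := by omega
  rw [this] at hcard
  simp [Fintype.card_fin] at hcard

lemma fin_sub_val {m : ℕ} (a b : Fin m) :
    (a - b).val = if b.val ≤ a.val then a.val - b.val else a.val + m - b.val := by
  have ha := a.isLt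
  have hb := b.isLt
  rw [Fin.sub_def]
  simp only []
  show (m - b.val + a.val) % m = _
  split
  · next h =>
    have he : m - b.val + a.val = (a.val - b.val) + m := by omega
    rw [he, Nat.add_mod_right, Nat.mod_eq_of_lt (by omega)]
  · next h =>
    rw [Nat.mod_eq_of_lt (by omega)]
    omega

lemma not_forest_of_triangle {V : Type*} {G : SimpleGraph V} {X : Finset V} {a b c : V}
    (ha : a ∈ X) (hb : b ∈ X) (hc : c ∈ X)
    (hab : G.Adj a b) (hbc : G.Adj b c) (hca : G.Adj c a) :
    ¬ IsInducedForest G X := by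
  intro hF
  let G' := G.induce (X : Set V)
  let a' : (X : Set V) := ⟨a, ha⟩
  let b' : (X : Set V) := ⟨b, hb⟩
  let c' : (X : Set V) := ⟨c, hc⟩
  have h1 : G'.Adj a' b' := hab
  have h2 : G'.Adj b' c' := hbc
  have h3 : G'.Adj c' a' := hca
  have hcyc : (Walk.cons h1 (Walk.cons h2 (Walk.cons h3 Walk.nil))).IsCycle := by
    have hab' : a' ≠ b' := fun he => G.ne_of_adj hab (congrArg Subtype.val he)
    have hbc' : b' ≠ c' := fun he => G.ne_of_adj hbc (congrArg Subtype.val he)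
    have hca' : c' ≠ a' := fun he => G.ne_of_adj hca (congrArg Subtype.val he)
    simp [Walk.isCycle_def, Walk.isTrail_def, hab', hbc', hca', hab'.symm, hbc'.symm, hca'.symm,
      Sym2.eq_iff]
  exact hF _ hcyc

instance {V : Type*} [DecidableEq V] [Fintype V] (G : SimpleGraph V) [DecidableRel G.Adj]
    (X : Finset V) : Decidable (IsIndepFinset G X) :=
  inferInstanceAs (Decidable (∀ u, u ∈ X → ∀ v, v ∈ X → ¬ G.Adj u v))

lemma c3max : ∀ S : Finset (Fin 3), IsIndepFinset (cycleGraph 3) S →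
    (∀ w, w ∉ S → ¬ IsIndepFinset (cycleGraph 3) (insert w S)) → S.card = 1 := by decide

lemma c4max : ∀ S : Finset (Fin 4), IsIndepFinset (cycleGraph 4) S →
    (∀ w, w ∉ S → ¬ IsIndepFinset (cycleGraph 4) (insert w S)) → S.card = 2 := by decide

abbrev Wheel (m : ℕ) : SimpleGraph (Fin m ⊕ Unit) :=
  joinGraph (SimpleGraph.cycleGraph m) (⊥ : SimpleGraph Unit)

abbrev hub (m : ℕ) : Fin m ⊕ Unit := Sum.inr ()

lemma star_forest {m : ℕ} {S : Finset (Fin m)} (hS : IsIndepFinset (cycleGraph m) S) :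
    IsInducedForest (Wheel m) (insert (hub m) (S.image (Sum.inl : Fin m → Fin m ⊕ Unit))) := by
  set X := insert (hub m) (S.image (Sum.inl : Fin m → Fin m ⊕ Unit)) with hX
  apply acyclic_of_unique_smaller _
    (fun x => Sum.elim (fun (i : Fin m) => i.val + 1) (fun _ => 0) x.1)
  · rintro ⟨(i|a), hi⟩ ⟨(j|b), hj⟩ he
    · simp only [Sum.elim_inl] at he
      have hij : i = j := Fin.ext (by omega)
      subst hij
      exact Subtype.ext rfl
    · simp at he
    · simp at he
    · exact Subtype.ext (by simp)
  · rintro ⟨(i|a), hv⟩ ⟨(j|b), hu⟩ ⟨(k|c), hw⟩ h1 h2 h3 h4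
    · -- both inl: j, k in S adjacent to i in S : contradiction with indep
      exfalso
      have hiS : i ∈ S := by
        simp [hX] at hv
        exact hv
      have hjS : j ∈ S := by
        simp [hX] at hu
        exact hu
      exact hS hiS hjS h1
    · exfalso
      have hiS : i ∈ S := by simp [hX] at hv; exact hv
      have hjS : j ∈ S := by simp [hX] at hu; exact hu
      exact hS hiS hjS h1
    · exfalso
      have hiS : i ∈ S := by simp [hX] at hv; exact hv
      have hkS : k ∈ S := by simp [hX] at hw; exact hw
      exact hS hiS hkS h2
    · exact Subtype.ext (by simp)
    all_goals simp at h3 h4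

lemma path_forest {m : ℕ} (hm : 3 ≤ m) {S : Finset (Fin m)} {w : Fin m} (hw : w ∉ S) :
    IsInducedForest (Wheel m) (S.image (Sum.inl : Fin m → Fin m ⊕ Unit)) := by
  haveI : NeZero m := ⟨by omega⟩
  set X := S.image (Sum.inl : Fin m → Fin m ⊕ Unit) with hX
  have hmem : ∀ x : Fin m ⊕ Unit, x ∈ (X : Set (Fin m ⊕ Unit)) → ∃ i ∈ S, x = Sum.inl i := by
    intro x hx
    simp [hX] at hx
    obtain ⟨i, hi, rfl⟩ := hx
    exact ⟨i, hi, rfl⟩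
  -- key claim about smaller neighbors
  have key : ∀ i ∈ S, ∀ j ∈ S, (cycleGraph m).Adj i j → (j - w).val < (i - w).val →
      (j - w).val = (i - w).val - 1 := by
    intro i hi j hj hadj hlt
    have hiw : i ≠ w := fun h => hw (h ▸ hi)
    have hjw : j ≠ w := fun h => hw (h ▸ hj)
    have ha0 : (i - w).val ≠ 0 := fun h => hiw (by
      have : i - w = 0 := Fin.ext (by simpa using h)
      exact sub_eq_zero.mp this)
    have hb0 : (j - w).val ≠ 0 := fun h => hjw (by
      have : j - w = 0 := Fin.ext (by simpa using h)
      exact sub_eq_zero.mp this)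
    have ham : (i - w).val < m := (i - w).isLt
    have hbm : (j - w).val < m := (j - w).isLt
    rw [cycleGraph_adj'] at hadj
    have e1 : i - j = (i - w) - (j - w) := by rw [sub_sub_sub_cancel_right]
    have e2 : j - i = (j - w) - (i - w) := by rw [sub_sub_sub_cancel_right]
    rcases hadj with h1 | h1
    · rw [e1, fin_sub_val, if_pos (le_of_lt hlt)] at h1
      omega
    · rw [e2, fin_sub_val, if_neg (by omega : ¬ (i - w).val ≤ (j - w).val)] at h1
      omega
  apply acyclic_of_unique_smaller _
    (fun x => Sum.elim (fun (i : Fin m) => (i - w).val) (fun _ => 0) x.1)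
  · rintro ⟨x, hx⟩ ⟨y, hy⟩ he
    obtain ⟨i, hi, rfl⟩ := hmem x hx
    obtain ⟨j, hj, rfl⟩ := hmem y hy
    simp only [Sum.elim_inl] at he
    have : i - w = j - w := Fin.ext he
    have hij : i = j := by
      have := sub_left_inj.mp this
      exact this
    subst hij
    exact Subtype.ext rfl
  · rintro ⟨x, hx⟩ ⟨y, hy⟩ ⟨z, hz⟩ h1 h2 h3 h4
    obtain ⟨i, hi, rfl⟩ := hmem x hx
    obtain ⟨j, hj, rfl⟩ := hmem y hy
    obtain ⟨k, hk, rfl⟩ := hmem z hz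
    simp only [Sum.elim_inl] at h3 h4
    have ha1 : (cycleGraph m).Adj i j := h1
    have ha2 : (cycleGraph m).Adj i k := h2
    have e1 := key i hi j hj ha1 h3
    have e2 := key i hi k hk ha2 h4
    have : j - w = k - w := Fin.ext (by omega)
    have hjk : j = k := sub_left_inj.mp this
    subst hjk
    exact Subtype.ext rfl

lemma not_forest_of_all_inl {m : ℕ} (hm : 3 ≤ m) {X : Finset (Fin m ⊕ Unit)}
    (hall : ∀ i : Fin m, Sum.inl i ∈ X) : ¬ IsInducedForest (Wheel m) X := by
  intro hF
  have hna := cycleGraph_not_acyclic hm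
  simp only [IsAcyclic, not_forall, not_not] at hna
  obtain ⟨v, c, hc⟩ := hna
  let φ : cycleGraph m →g (Wheel m).induce (X : Set (Fin m ⊕ Unit)) :=
    ⟨fun i => ⟨Sum.inl i, hall i⟩, fun {a b} h => h⟩
  have hinj : Function.Injective φ := by
    intro a b hab
    have := congrArg Subtype.val hab
    exact Sum.inl.inj this
  exact hF (c.map φ) (hc.map hinj)

lemma card_of_maximal {m : ℕ} (hm : 3 ≤ m) {X : Finset (Fin m ⊕ Unit)}
    (hX : IsMaximalInducedForest (Wheel m) X) :
    X.card = m - 1 ∨ ∃ S : Finset (Fin m),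
      (IsIndepFinset (cycleGraph m) S ∧
        ∀ w, w ∉ S → ¬ IsIndepFinset (cycleGraph m) (insert w S)) ∧ X.card = 1 + S.card := by
  set S : Finset (Fin m) := Finset.univ.filter (fun i => Sum.inl i ∈ X) with hSdef
  have hS : ∀ i : Fin m, i ∈ S ↔ Sum.inl i ∈ X := by
    intro i; simp [hSdef]
  by_cases hhub : hub m ∈ X
  · -- X = insert hub (image inl S)
    right
    have hXeq : X = insert (hub m) (S.image (Sum.inl : Fin m → Fin m ⊕ Unit)) := by
      ext x
      rcases x with i | u
      · simp [hS i, hub]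
      · cases u
        simp [hub, hhub]
    have hindep : IsIndepFinset (cycleGraph m) S := by
      intro u hu v hv hadj
      exact not_forest_of_triangle hhub ((hS u).mp hu) ((hS v).mp hv)
        (trivial) hadj (trivial) hX.1
    have hmax : ∀ w, w ∉ S → ¬ IsIndepFinset (cycleGraph m) (insert w S) := by
      intro w hw hind
      have hwX : Sum.inl w ∉ X := fun h => hw ((hS w).mpr h)
      have hsub : X ⊂ insert (Sum.inl w) X := Finset.ssubset_insert hwX
      apply hX.2 _ hsub
      have : insert (Sum.inl w) X =
          insert (hub m) ((insert w S).image (Sum.inl : Fin m → Fin m ⊕ Unit)) := by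
        rw [hXeq, Finset.image_insert, Finset.insert_comm]
      rw [this]
      exact star_forest hind
    refine ⟨S, ⟨hindep, hmax⟩, ?_⟩
    rw [hXeq, Finset.card_insert_of_notMem (by simp [hub]),
      Finset.card_image_of_injective _ Sum.inl_injective]
    omega
  · left
    have hXeq : X = S.image (Sum.inl : Fin m → Fin m ⊕ Unit) := by
      ext x
      rcases x with i | u
      · simp [hS i]
      · cases u
        simp [hub] at hhub
        simp [hhub]
    obtain ⟨w, hw⟩ : ∃ w, w ∉ S := by
      by_contra hall
      push_neg at hall
      exact not_forest_of_all_inl hm (fun i => (hS i).mp (hall i)) hX.1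
    have huniq : ∀ w', w' ∉ S → w' = w := by
      intro w' hw'
      by_contra hne
      have hwX : Sum.inl w' ∉ X := fun h => hw' ((hS w').mpr h)
      have hsub : X ⊂ insert (Sum.inl w') X := Finset.ssubset_insert hwX
      apply hX.2 _ hsub
      have : insert (Sum.inl w') X =
          (insert w' S).image (Sum.inl : Fin m → Fin m ⊕ Unit) := by
        rw [hXeq, Finset.image_insert]
      rw [this]
      exact path_forest (w := w) hm (by
        simp only [Finset.mem_insert, not_or]
        exact ⟨fun h => hne h.symm, hw⟩)
    have hSeq : S = Finset.univ.erase w := by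
      ext i
      simp only [Finset.mem_erase, Finset.mem_univ, and_true]
      constructor
      · intro hi
        exact fun he => hw (he ▸ hi)
      · intro hi
        by_contra hiS
        exact hi (huniq i hiS)
    rw [hXeq, Finset.card_image_of_injective _ Sum.inl_injective, hSeq,
      Finset.card_erase_of_mem (Finset.mem_univ w), Finset.card_univ, Fintype.card_fin]

lemma not_wfc {m : ℕ} (hm : 5 ≤ m) : ¬ WellFCovered (Wheel m) := by
  haveI : NeZero m := ⟨by omega⟩
  have hm3 : 3 ≤ m := by omega
  set X₁ : Finset (Fin m ⊕ Unit) :=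
    (Finset.univ.erase (0 : Fin m)).image (Sum.inl : Fin m → Fin m ⊕ Unit) with hX₁def
  have hX₁mem : ∀ i : Fin m, Sum.inl i ∈ X₁ ↔ i ≠ 0 := by
    intro i; simp [hX₁def]
  have hX₁hub : hub m ∉ X₁ := by simp [hX₁def, hub]
  have hX₁max : IsMaximalInducedForest (Wheel m) X₁ := by
    constructor
    · exact path_forest (w := 0) hm3 (by simp)
    · intro Y hsub hF
      obtain ⟨y, hyY, hyX⟩ := Finset.exists_of_ssubset hsub
      rcases y with i | u
      · have hi : i = 0 := by
          by_contra hne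
          exact hyX ((hX₁mem i).mpr hne)
        subst hi
        refine not_forest_of_all_inl hm3 (fun j => ?_) hF
        by_cases hj : j = 0
        · subst hj; exact hyY
        · exact hsub.subset ((hX₁mem j).mpr hj)
      · cases u
        have h1 : Sum.inl (⟨1, by omega⟩ : Fin m) ∈ Y :=
          hsub.subset ((hX₁mem _).mpr (by simp [Fin.ext_iff]))
        have h2 : Sum.inl (⟨2, by omega⟩ : Fin m) ∈ Y :=
          hsub.subset ((hX₁mem _).mpr (by simp [Fin.ext_iff]))
        refine not_forest_of_triangle hyY h1 h2 trivial ?_ trivial hF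
        show (cycleGraph m).Adj _ _
        rw [cycleGraph_adj']
        right
        have e1 : (⟨1, by omega⟩ : Fin m).val = 1 := rfl
        have e2 : (⟨2, by omega⟩ : Fin m).val = 2 := rfl
        rw [fin_sub_val, e1, e2, if_pos (by omega)]
  have hX₁card : X₁.card = m - 1 := by
    rw [hX₁def, Finset.card_image_of_injective _ Sum.inl_injective,
      Finset.card_erase_of_mem (Finset.mem_univ _), Finset.card_univ, Fintype.card_fin]
  set M : Finset (Fin m) :=
    Finset.univ.filter (fun i => i.val % 2 = 0 ∧ i.val ≠ m - 1) with hMdef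
  have hMmem : ∀ i : Fin m, i ∈ M ↔ (i.val % 2 = 0 ∧ i.val ≠ m - 1) := by
    intro i; simp [hMdef]
  have hMindep : IsIndepFinset (cycleGraph m) M := by
    intro u hu v hv hadj
    obtain ⟨hu1, hu2⟩ := (hMmem u).mp hu
    obtain ⟨hv1, hv2⟩ := (hMmem v).mp hv
    have hum := u.isLt
    have hvm := v.isLt
    rw [cycleGraph_adj'] at hadj
    rcases hadj with h | h <;>
    · rw [fin_sub_val] at h
      split at h <;> omega
  set X₂ : Finset (Fin m ⊕ Unit) :=
    insert (hub m) (M.image (Sum.inl : Fin m → Fin m ⊕ Unit)) with hX₂def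
  have hX₂max : IsMaximalInducedForest (Wheel m) X₂ := by
    constructor
    · exact star_forest hMindep
    · intro Y hsub hF
      obtain ⟨y, hyY, hyX⟩ := Finset.exists_of_ssubset hsub
      rcases y with w | u
      swap
      · cases u; exact hyX (by simp [hX₂def, hub])
      have hw : ¬(w.val % 2 = 0 ∧ w.val ≠ m - 1) := by
        intro hmem
        exact hyX (by
          rw [hX₂def]
          exact Finset.mem_insert_of_mem (Finset.mem_image_of_mem _ ((hMmem w).mpr hmem)))
      have hwm := w.isLt
      have hhubY : hub m ∈ Y := hsub.subset (by simp [hX₂def])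
      have hMY : ∀ i ∈ M, Sum.inl i ∈ Y := by
        intro i hi
        exact hsub.subset (by
          rw [hX₂def]
          exact Finset.mem_insert_of_mem (Finset.mem_image_of_mem _ hi))
      by_cases heven : w.val % 2 = 0
      · -- then w.val = m - 1 ; neighbor 0
        have hwval : w.val = m - 1 := by tauto
        have e0 : (⟨0, by omega⟩ : Fin m).val = 0 := rfl
        have h0M : (⟨0, by omega⟩ : Fin m) ∈ M := (hMmem _).mpr (by rw [e0]; omega)
        refine not_forest_of_triangle hhubY hyY (hMY _ h0M) trivial ?_ trivial hF
        show (cycleGraph m).Adj _ _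
        rw [cycleGraph_adj']
        right
        rw [fin_sub_val, e0, if_neg (by omega)]
        omega
      · -- w odd ; neighbor w-1
        have eu : (⟨w.val - 1, by omega⟩ : Fin m).val = w.val - 1 := rfl
        have huM : (⟨w.val - 1, by omega⟩ : Fin m) ∈ M := (hMmem _).mpr (by rw [eu]; omega)
        refine not_forest_of_triangle hhubY hyY (hMY _ huM) trivial ?_ trivial hF
        show (cycleGraph m).Adj _ _
        rw [cycleGraph_adj']
        left
        rw [fin_sub_val, eu, if_pos (by omega)]
        omega
  have hX₂card : X₂.card = 1 + M.card := by
    rw [hX₂def, Finset.card_insert_of_notMem (by simp [hub]),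
      Finset.card_image_of_injective _ Sum.inl_injective]
    omega
  -- bound on M.card
  have hMbound : 2 * M.card ≤ m := by
    set g : Fin m → Fin m := fun i => if h : i.val + 1 < m then ⟨i.val + 1, h⟩ else i with hgdef
    have hg : ∀ i ∈ M, (g i).val = i.val + 1 := by
      intro i hi
      obtain ⟨h1, h2⟩ := (hMmem i).mp hi
      have := i.isLt
      rw [hgdef]
      simp only []
      rw [dif_pos (by omega)]
    have hinjOn : Set.InjOn g M := by
      intro i hi j hj he
      have e1 := hg i (by simpa using hi)
      have e2 := hg j (by simpa using hj)
      have e3 : (g i).val = (g j).val := congrArg Fin.val he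
      exact Fin.ext (by omega)
    have hcard' : (M.image g).card = M.card := Finset.card_image_of_injOn hinjOn
    have hdisj : Disjoint M (M.image g) := by
      rw [Finset.disjoint_left]
      intro x hx hx'
      obtain ⟨h1, _⟩ := (hMmem x).mp hx
      obtain ⟨i, hi, rfl⟩ := Finset.mem_image.mp hx'
      obtain ⟨h3, _⟩ := (hMmem i).mp hi
      rw [hg i hi] at h1
      omega
    have := Finset.card_union_of_disjoint hdisj
    have hle := Finset.card_le_univ (M ∪ M.image g)
    rw [this, hcard'] at hle
    simp only [Finset.card_univ, Fintype.card_fin] at hle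
    omega
  intro hW
  have := hW X₁ X₂ hX₁max hX₂max
  rw [hX₁card, hX₂card] at this
  omega

end Aux

/-- For `n ≥ 4`, the wheel `W_n` on `n` vertices — the join of a cycle
on `n - 1` vertices with a single additional vertex adjacent to all cycle vertices —
is well-f-covered if and only if `n = 4` or `n = 5`. -/

theorem stmt17 (n : ℕ) (hn : 4 ≤ n) :
    WellFCovered (joinGraph (SimpleGraph.cycleGraph (n - 1)) (⊥ : SimpleGraph Unit)) ↔
      (n = 4 ∨ n = 5) := by
  have hm3 : 3 ≤ n - 1 := by omega
  constructor
  · intro hW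
    by_contra hne
    push_neg at hne
    exact not_wfc (m := n - 1) (by omega) hW
  · intro h X Y hX hY
    have key : ∀ Z : Finset (Fin (n - 1) ⊕ Unit),
        IsMaximalInducedForest (Wheel (n - 1)) Z → Z.card = n - 2 := by
      intro Z hZ
      rcases card_of_maximal hm3 hZ with h1 | ⟨S, hP, h1⟩
      · omega
      · rcases h with rfl | rfl
        · have hS : S.card = 1 := c3max S hP.1 hP.2
          omega
        · have hS : S.card = 2 := c4max S hP.1 hP.2
          omega
    rw [key X hX, key Y hY]
end
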